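/- Under the bijection π from the root lattice {a ∈ Z^ℓ : ∑ a_j = 0} to ℓ-cores, the ℓ-cores λ with λ_1 = k > 0 all lie in the affine hyperplane {a : a_{(k mod ℓ)} = ⌈k/ℓ⌉} (with index taken in {1,...,ℓ}). -/

import Mathlib

/-- In the flush abacus with `ℓ` runners determined by the vector `a` (indexed
`1, ..., ℓ`), the integer entry `q` (at level `q / ℓ` on runner `q % ℓ`) is a bead:
runner `j - 1` carries beads at all levels `≤ a j`. -/
def IsBead (ℓ : ℕ) (a : ℕ → ℤ) (q : ℤ) : Prop :=
  q / (ℓ : ℤ) ≤ a ((q % (ℓ : ℤ)).toNat + 1)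

/-- Under the bijection `π` from the root lattice `{a ∈ ℤ^ℓ : ∑ a_j = 0}` to
`ℓ`-cores, the `ℓ`-cores `λ` with largest part `λ₁ = k > 0` all lie in the affine
hyperplane `a_{(k mod ℓ)} = ⌈k/ℓ⌉`: writing `k = (j-1)ℓ + i` with `1 ≤ i ≤ ℓ` and
`j ≥ 1`, if the number of gaps preceding the largest bead `p` in reading order
equals `k`, then `a i = j`. -/
theorem stmt_18 (ℓ k i j : ℕ) (hℓ : 2 ≤ ℓ) (a : ℕ → ℤ) (p : ℤ)
    (hsum : ∑ m ∈ Finset.Icc 1 ℓ, a m = 0)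
    (hk : 0 < k) (hi1 : 1 ≤ i) (hi2 : i ≤ ℓ) (hj : 1 ≤ j)
    (hkij : k = (j - 1) * ℓ + i)
    (hp : IsBead ℓ a p) (hpmax : ∀ q : ℤ, IsBead ℓ a q → q ≤ p)
    (hpart : {q : ℤ | ¬ IsBead ℓ a q ∧ q < p}.ncard = k) :
    a i = (j : ℤ) := by
  classical
  have hl0 : 0 < ℓ := by omega
  have hL0 : (0:ℤ) < (ℓ:ℤ) := by exact_mod_cast hl0
  have hLne : (ℓ:ℤ) ≠ 0 := hL0.ne'
  -- division/mod helper
  have hdm : ∀ s m : ℤ, 0 ≤ s → s < (ℓ:ℤ) →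
      (s + m * ℓ) / (ℓ:ℤ) = m ∧ (s + m * ℓ) % (ℓ:ℤ) = s := by
    intro s m h0 h1
    refine ⟨?_, ?_⟩
    · rw [Int.add_mul_ediv_right _ _ hLne, Int.ediv_eq_zero_of_lt h0 h1, zero_add]
    · rw [Int.add_mul_emod_self_right, Int.emod_eq_of_lt h0 h1]
  set v : ℤ := p / (ℓ:ℤ) with hv
  set rp : ℕ := (p % (ℓ:ℤ)).toNat with hrpdef
  have hrpz : (rp : ℤ) = p % (ℓ:ℤ) := Int.toNat_of_nonneg (Int.emod_nonneg p hLne)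
  have hrpl : rp < ℓ := by
    have h := Int.emod_lt_of_pos p hL0
    rw [← hrpz] at h
    exact_mod_cast h
  have hpv : p = (rp:ℤ) + v * ℓ := by
    have h := Int.emod_add_mul_ediv p (ℓ:ℤ)
    rw [← hrpz] at h
    linarith [h]
  -- beads
  have hbead : ∀ r : ℕ, r < ℓ → IsBead ℓ a ((r:ℤ) + a (r+1) * ℓ) := by
    intro r hr
    obtain ⟨hd, hm⟩ := hdm r (a (r+1)) (by positivity) (by exact_mod_cast hr)
    unfold IsBead
    rw [hd, hm]
    simp
  have hbd : ∀ r : ℕ, r < ℓ → (r:ℤ) + a (r+1) * ℓ ≤ p := fun r hr => hpmax _ (hbead r hr)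
  have hav : a (rp+1) = v := by
    have h1 : v ≤ a (rp+1) := hp
    have h2 : a (rp+1) ≤ v := by
      have h := hbd rp hrpl
      rw [hpv] at h
      have h3 : a (rp+1) * ℓ ≤ v * ℓ := by linarith
      exact le_of_mul_le_mul_right h3 hL0
    linarith
  set c : ℕ → ℤ := fun r => (p - 1 - r) / (ℓ:ℤ) with hcdef
  set F : Finset ℤ := (Finset.range ℓ).biUnion
    (fun r => (Finset.Ioc (a (r+1)) (c r)).image (fun lvl => (r:ℤ) + lvl * ℓ)) with hFdef
  have hmemF : ∀ q : ℤ, q ∈ F ↔ (¬ IsBead ℓ a q ∧ q < p) := by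
    intro q
    simp only [hFdef, Finset.mem_biUnion, Finset.mem_image, Finset.mem_range, Finset.mem_Ioc]
    constructor
    · rintro ⟨r, hr, lvl, ⟨hl1, hl2⟩, rfl⟩
      obtain ⟨hd, hm⟩ := hdm r lvl (by positivity) (by exact_mod_cast hr)
      constructor
      · unfold IsBead
        rw [hd, hm]
        simp only [Int.toNat_natCast]
        exact not_le.mpr hl1
      · have hml : lvl * ℓ ≤ p - 1 - r := (Int.le_ediv_iff_mul_le hL0).mp hl2
        linarith
    · rintro ⟨hnb, hqp⟩
      have hq0 : (0:ℤ) ≤ q % ℓ := Int.emod_nonneg q hLne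
      have hqlt : q % ℓ < (ℓ:ℤ) := Int.emod_lt_of_pos q hL0
      have hqz : ((q % (ℓ:ℤ)).toNat : ℤ) = q % ℓ := Int.toNat_of_nonneg hq0
      have hde : q % ℓ + (ℓ:ℤ) * (q / ℓ) = q := Int.emod_add_mul_ediv q (ℓ:ℤ)
      refine ⟨(q % (ℓ:ℤ)).toNat, ?_, q / ℓ, ⟨?_, ?_⟩, ?_⟩
      · have : ((q % (ℓ:ℤ)).toNat : ℤ) < (ℓ:ℤ) := by rw [hqz]; exact hqlt
        exact_mod_cast this
      · unfold IsBead at hnb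
        exact not_le.mp hnb
      · show q / (ℓ:ℤ) ≤ c ((q % (ℓ:ℤ)).toNat)
        have : (q / (ℓ:ℤ)) * ℓ ≤ p - 1 - ((q % (ℓ:ℤ)).toNat : ℤ) := by
          rw [hqz]; linarith
        exact (Int.le_ediv_iff_mul_le hL0).mpr (by rw [hcdef] at *; exact this)
      · rw [hqz]; linarith
  have hSF : {q : ℤ | ¬ IsBead ℓ a q ∧ q < p} = ↑F := by
    ext q
    rw [Set.mem_setOf_eq, Finset.mem_coe, hmemF]
  have hFk : F.card = k := by
    rw [← hpart, hSF, Set.ncard_coe_finset]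
  have hcard : F.card = ∑ r ∈ Finset.range ℓ, (c r - a (r+1)).toNat := by
    rw [hFdef, Finset.card_biUnion]
    · refine Finset.sum_congr rfl ?_
      intro r _
      rw [Finset.card_image_of_injective _ (fun x y hxy => by
        exact mul_right_cancel₀ hLne (add_left_cancel hxy)), Int.card_Ioc]
    · intro r1 h1 r2 h2 hne
      show Disjoint _ _
      rw [Finset.disjoint_left]
      intro x hx1 hx2
      simp only [Finset.mem_image, Finset.mem_Ioc] at hx1 hx2
      obtain ⟨l1, _, he1⟩ := hx1
      obtain ⟨l2, _, he2⟩ := hx2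
      simp only [Finset.mem_coe, Finset.mem_range] at h1 h2
      have hm1 := (hdm r1 l1 (by positivity) (by exact_mod_cast h1)).2
      have hm2 := (hdm r2 l2 (by positivity) (by exact_mod_cast h2)).2
      rw [he1] at hm1
      rw [he2] at hm2
      rw [hm1] at hm2
      exact hne (by exact_mod_cast hm2)
  have hcr : ∀ r : ℕ, r < ℓ → c r = if r < rp then v else v - 1 := by
    intro r hr
    by_cases h : r < rp
    · have he : p - 1 - (r:ℤ) = ((rp:ℤ) - 1 - r) + v * ℓ := by rw [hpv]; ring
      rw [if_pos h]
      show (p - 1 - (r:ℤ)) / (ℓ:ℤ) = v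
      rw [he, (hdm _ v (by omega) (by omega)).1]
    · have he : p - 1 - (r:ℤ) = ((ℓ:ℤ) + rp - 1 - r) + (v - 1) * ℓ := by rw [hpv]; ring
      rw [if_neg h]
      show (p - 1 - (r:ℤ)) / (ℓ:ℤ) = v - 1
      rw [he, (hdm _ (v-1) (by omega) (by omega)).1]
  have hnonneg : ∀ r : ℕ, r < ℓ → r ≠ rp → a (r+1) ≤ c r := by
    intro r hr hne
    have hb := hbd r hr
    have hlt : (r:ℤ) + a (r+1) * ℓ < p := by
      rcases lt_or_eq_of_le hb with h | h
      · exact h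
      · exfalso
        have hm := (hdm r (a (r+1)) (by positivity) (by exact_mod_cast hr)).2
        rw [h] at hm
        have : (rp:ℤ) = r := by rw [hrpz, hm]
        exact hne (by exact_mod_cast this.symm)
    have h2 : a (r+1) * ℓ ≤ p - 1 - r := by
      have := Int.lt_iff_add_one_le.mp hlt
      linarith
    exact (Int.le_ediv_iff_mul_le hL0).mpr h2
  have hkZ : (k:ℤ) = ∑ r ∈ Finset.range ℓ, ((c r - a (r+1)).toNat : ℤ) := by
    rw [← hFk, hcard]
    push_cast
    rfl
  have hterm : ∀ r ∈ Finset.range ℓ,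
      ((c r - a (r+1)).toNat : ℤ) = (c r - a (r+1)) + (if r = rp then 1 else 0) := by
    intro r hr
    simp only [Finset.mem_range] at hr
    by_cases h : r = rp
    · rw [if_pos h, h, hav, hcr rp hrpl, if_neg (lt_irrefl rp)]
      norm_num
    · rw [if_neg h, Int.toNat_of_nonneg (by linarith [hnonneg r hr h]), add_zero]
  have hkZ2 : (k:ℤ) = (∑ r ∈ Finset.range ℓ, (c r - a (r+1))) + 1 := by
    rw [hkZ, Finset.sum_congr rfl hterm, Finset.sum_add_distrib,
      Finset.sum_ite_eq' (Finset.range ℓ) rp (fun _ => (1:ℤ)),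
      if_pos (Finset.mem_range.mpr hrpl)]
  have hsuma : ∑ r ∈ Finset.range ℓ, a (r+1) = 0 := by
    have h := hsum
    rw [← Finset.Ico_add_one_right_eq_Icc, Finset.sum_Ico_eq_sum_range] at h
    simpa [add_comm] using h
  have hsumc : ∑ r ∈ Finset.range ℓ, c r = (rp:ℤ) * v + ((ℓ:ℤ) - rp) * (v - 1) := by
    rw [Finset.sum_congr rfl (fun r hr => hcr r (Finset.mem_range.mp hr)), Finset.sum_ite]
    have h1 : (Finset.range ℓ).filter (fun r => r < rp) = Finset.range rp := by
      ext x; simp only [Finset.mem_filter, Finset.mem_range]; omega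
    have h2 : (Finset.range ℓ).filter (fun r => ¬ r < rp) = Finset.Ico rp ℓ := by
      ext x; simp only [Finset.mem_filter, Finset.mem_range, Finset.mem_Ico]; omega
    rw [h1, h2, Finset.sum_const, Finset.sum_const, Finset.card_range, Nat.card_Ico,
      nsmul_eq_mul, nsmul_eq_mul]
    have : ((ℓ - rp : ℕ) : ℤ) = (ℓ:ℤ) - rp := by omega
    rw [this]
  have hfin : (k:ℤ) = (rp:ℤ) * v + ((ℓ:ℤ) - rp) * (v - 1) + 1 := by
    rw [hkZ2, Finset.sum_sub_distrib, hsumc, hsuma, sub_zero]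
  have hkij' : (k:ℤ) = ((j:ℤ) - 1) * ℓ + i := by
    have hj1 : ((j - 1 : ℕ) : ℤ) = (j:ℤ) - 1 := by omega
    rw [hkij]
    push_cast [hj1]
    ring
  have key : ((j:ℤ) - v) * ℓ = ((rp:ℤ) + 1) - i := by
    linear_combination hfin - hkij'
  have hjv : (j:ℤ) = v := by
    have hb1 : ((rp:ℤ) + 1) - i < (ℓ:ℤ) := by omega
    have hb2 : -(ℓ:ℤ) < ((rp:ℤ) + 1) - i := by omega
    rcases lt_trichotomy ((j:ℤ) - v) 0 with h | h | h
    · exfalso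
      have h1 : (j:ℤ) - v ≤ -1 := by omega
      have h2 := mul_le_mul_of_nonneg_right h1 hL0.le
      rw [key] at h2
      linarith
    · linarith
    · exfalso
      have h1 : (1:ℤ) ≤ (j:ℤ) - v := by omega
      have h2 := mul_le_mul_of_nonneg_right h1 hL0.le
      rw [key] at h2
      linarith
  have hirp : i = rp + 1 := by
    have h0 : ((rp:ℤ) + 1) - i = 0 := by rw [← key, hjv]; ring
    omega
  rw [hirp, hav]
  exact hjv.symm
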